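/- arXiv:1611.02088 — 2 statements merged into one kernel-verified Lean document; each statement's English description precedes it below -/
import Mathlib

section
/- Let m : ℝ³ → ℝ³ be C¹ on an open neighborhood of the closure of Ω, and let u₀ : ℝ³ → ℝ be C² on an open neighborhood of the closure of Ω with Δu₀ = div m on Ω and u₀ = 0 on Γ. Define ψ : ℝ³ → ℝ by ψ(y) = ⟨m(y) − ∇u₀(y), n(y)⟩ and the single layer potential u₁(x) = (1/(4π)) ∫_Γ ψ(y)/‖x − y‖ dσ(y). Assume u₁ is C¹ on an open neighborhood of the closure of Ω, C² on Ω with Δu₁ = 0 on Ω, and that (x, y) ↦ ψ(x)ψ(y)/‖x − y‖ is integrable on Γ × Γ with respect to σ ⊗ σ. Then the magnetostatic energy e_d := ∫_Ω ⟨m(x), ∇u₀(x) + ∇u₁(x)⟩ dx satisfies e_d = ∫_Ω ‖∇u₀(x)‖² dx + (1/(4π)) ∫_Γ ∫_Γ ψ(x)ψ(y)/‖x − y‖ dσ(y) dσ(x). -/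
open MeasureTheory Real
open scoped Convolution
noncomputable section

abbrev R3 := EuclideanSpace ℝ (Fin 3)

/-- i-th partial derivative -/
def pd (i : Fin 3) (f : R3 → ℝ) (x : R3) : ℝ := fderiv ℝ f x (EuclideanSpace.single i 1)

/-- divergence: div F = ∑ᵢ ∂ᵢFᵢ -/
def vdiv (F : R3 → R3) (x : R3) : ℝ := ∑ i, pd i (fun y => F y i) x

/-- Laplacian: Δu = div(∇u) -/
def lap (u : R3 → ℝ) (x : R3) : ℝ := vdiv (fun y => gradient u y) x

/-! ### Auxiliary lemmas -/

section Aux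

open Metric

lemma inner_gradient_eq (h : R3 → ℝ) (x v : R3) :
    (inner ℝ (gradient h x) v : ℝ) = fderiv ℝ h x v := by
  rw [gradient]; exact InnerProductSpace.toDual_symm_apply

lemma sum_single_eq (v : R3) : ∑ i, v i • EuclideanSpace.single i (1:ℝ) = v := by
  ext j
  have h : ∀ i : Fin 3, (v i • EuclideanSpace.single i (1:ℝ)) j = if j = i then v i else 0 := by
    intro i
    simp [EuclideanSpace.single_apply, PiLp.smul_apply, smul_eq_mul, mul_ite]
  rw [WithLp.ofLp_sum, Finset.sum_apply]
  simp only [h]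
  simp

lemma clm_apply_eq_sum (ℓ : R3 →L[ℝ] ℝ) (v : R3) :
    ℓ v = ∑ i, v i * ℓ (EuclideanSpace.single i 1) := by
  conv_lhs => rw [← sum_single_eq v]
  rw [map_sum]
  simp [smul_eq_mul]

lemma vdiv_smul (h : R3 → ℝ) (G : R3 → R3) (x : R3)
    (hh : DifferentiableAt ℝ h x) (hG : ∀ i, DifferentiableAt ℝ (fun y => G y i) x) :
    vdiv (fun y => h y • G y) x = (inner ℝ (gradient h x) (G x) : ℝ) + h x * vdiv G x := by
  unfold vdiv pd
  have hc : ∀ i : Fin 3, (fun y => (h y • G y) i) = fun y => h y * G y i := fun i => rfl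
  have hder : ∀ i : Fin 3,
      fderiv ℝ (fun y => h y * G y i) x (EuclideanSpace.single i 1)
        = h x * fderiv ℝ (fun y => G y i) x (EuclideanSpace.single i 1)
          + G x i * fderiv ℝ h x (EuclideanSpace.single i 1) := by
    intro i
    rw [fderiv_fun_mul hh (hG i)]
    simp
  simp only [hc, hder]
  rw [Finset.sum_add_distrib, ← Finset.mul_sum]
  rw [inner_gradient_eq, clm_apply_eq_sum (fderiv ℝ h x) (G x)]
  ring

lemma vdiv_sub (A B : R3 → R3) (x : R3)
    (hA : ∀ i, DifferentiableAt ℝ (fun y => A y i) x)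
    (hB : ∀ i, DifferentiableAt ℝ (fun y => B y i) x) :
    vdiv (fun y => A y - B y) x = vdiv A x - vdiv B x := by
  unfold vdiv pd
  have hc : ∀ i : Fin 3, (fun y => (A y - B y) i) = fun y => A y i - B y i := fun i => rfl
  have hder : ∀ i : Fin 3,
      fderiv ℝ (fun y => A y i - B y i) x (EuclideanSpace.single i 1)
        = fderiv ℝ (fun y => A y i) x (EuclideanSpace.single i 1)
          - fderiv ℝ (fun y => B y i) x (EuclideanSpace.single i 1) := by
    intro i
    rw [fderiv_fun_sub (hA i) (hB i)]; simp
  simp only [hc, hder]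
  rw [Finset.sum_sub_distrib]

lemma contDiffOn_gradient (u : R3 → ℝ) (U : Set R3) (hU : IsOpen U) (n : ℕ∞)
    (hu : ContDiffOn ℝ (n+1) u U) : ContDiffOn ℝ n (fun y => gradient u y) U := by
  have h1 : ContDiffOn ℝ n (fderiv ℝ u) U := hu.fderiv_of_isOpen hU le_rfl
  have h2 : ContDiff ℝ n ((InnerProductSpace.toDual ℝ R3).symm : StrongDual ℝ R3 → R3) :=
    (InnerProductSpace.toDual ℝ R3).symm.contDiff
  exact h2.comp_contDiffOn h1

lemma diffAt_comp {G : R3 → R3} {U : Set R3} (hU : IsOpen U) (hG : ContDiffOn ℝ 1 G U)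
    {x : R3} (hx : x ∈ U) (i : Fin 3) : DifferentiableAt ℝ (fun y => G y i) x := by
  have h := (hG.differentiableOn one_ne_zero).differentiableAt (hU.mem_nhds hx)
  exact ((EuclideanSpace.proj (𝕜 := ℝ) i).differentiableAt).comp x h

lemma continuousOn_vdiv {G : R3 → R3} {U : Set R3} (hU : IsOpen U)
    (hG : ContDiffOn ℝ 1 G U) : ContinuousOn (vdiv G) U := by
  have hfd : ContinuousOn (fderiv ℝ G) U := hG.continuousOn_fderiv_of_isOpen hU le_rfl
  have h2 : ContinuousOn (fun x => ∑ i : Fin 3,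
      (fderiv ℝ G x (EuclideanSpace.single i 1)) i) U := by
    apply continuousOn_finset_sum
    intro i _
    exact (EuclideanSpace.proj (𝕜 := ℝ) i).continuous.comp_continuousOn
      (hfd.clm_apply continuousOn_const)
  apply h2.congr
  intro x hx
  have hdG : DifferentiableAt ℝ G x := (hG.differentiableOn one_ne_zero).differentiableAt (hU.mem_nhds hx)
  unfold vdiv pd
  congr 1
  funext i
  have h : fderiv ℝ (fun y => G y i) x
      = (EuclideanSpace.proj (𝕜 := ℝ) i).comp (fderiv ℝ G x) :=
    ((EuclideanSpace.proj (𝕜 := ℝ) i).hasFDerivAt.comp x hdG.hasFDerivAt).fderiv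
  rw [h]
  rfl

/-! ### A quantitative smooth cutoff -/

def cutf (s : Set R3) (η : ℝ) (x : R3) : ℝ := max 0 (min 1 (infDist x s / η - 1))

def bumpη (η : ℝ) (hη : 0 < η) : ContDiffBump (0 : R3) :=
  ⟨η/4, η/2, by positivity, by linarith⟩

def cutchi (s : Set R3) (η : ℝ) (hη : 0 < η) : R3 → ℝ :=
  (bumpη η hη).normed volume ⋆[ContinuousLinearMap.lsmul ℝ ℝ, volume] cutf s η

variable {s : Set R3} {η : ℝ}

lemma cutf_lip (hη : 0 < η) : LipschitzWith (η⁻¹).toNNReal (cutf s η) := by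
  have h1 : LipschitzWith (η⁻¹).toNNReal (fun t : ℝ => t / η - 1) := by
    apply LipschitzWith.of_dist_le_mul
    intro a b
    rw [Real.dist_eq, Real.dist_eq]
    have h : a / η - 1 - (b / η - 1) = (a - b) / η := by ring
    rw [h, abs_div, abs_of_pos hη, Real.coe_toNNReal _ (by positivity), div_eq_inv_mul]
  have h2 : LipschitzWith (η⁻¹).toNNReal fun t : ℝ => max 0 (min 1 (t / η - 1)) :=
    (h1.const_min 1).const_max 0
  have h3 := h2.comp (lipschitz_infDist_pt s)
  exact h3.weaken (le_of_eq (mul_one _))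

lemma cutf_nonneg (x : R3) : 0 ≤ cutf s η x := le_max_left _ _

lemma cutf_le_one (x : R3) : cutf s η x ≤ 1 :=
  max_le (by norm_num) (min_le_left _ _)

lemma cutf_continuous (hη : 0 < η) : Continuous (cutf s η) := (cutf_lip hη).continuous

lemma cutf_eq_zero (hη : 0 < η) {x : R3} (hx : infDist x s ≤ η) : cutf s η x = 0 := by
  have h : infDist x s / η - 1 ≤ 0 := by
    rw [sub_nonpos, div_le_one hη]; exact hx
  have h2 : min 1 (infDist x s / η - 1) ≤ 0 := le_trans (min_le_right _ _) h
  simp [cutf, max_eq_left h2]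

lemma cutf_eq_one (hη : 0 < η) {x : R3} (hx : 2*η ≤ infDist x s) : cutf s η x = 1 := by
  have h : (1:ℝ) ≤ infDist x s / η - 1 := by
    rw [le_sub_iff_add_le, le_div_iff₀ hη]; linarith
  simp [cutf, min_eq_left h]

lemma cutchi_def (hη : 0 < η) (x : R3) :
    cutchi s η hη x = ∫ t, (bumpη η hη).normed volume t * cutf s η (x - t) := by
  rw [cutchi, convolution_def]
  simp [ContinuousLinearMap.lsmul_apply, smul_eq_mul]

lemma cutchi_integrand_integrable (hη : 0 < η) (x : R3) :
    Integrable (fun t => (bumpη η hη).normed volume t * cutf s η (x - t)) volume := by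
  apply Continuous.integrable_of_hasCompactSupport
  · exact ((bumpη η hη).continuous_normed).mul ((cutf_continuous hη).comp (continuous_const.sub continuous_id))
  · apply HasCompactSupport.mul_right
    exact (bumpη η hη).hasCompactSupport_normed

lemma cutchi_eq_zero (hη : 0 < η) {x : R3} (hx : infDist x s ≤ η/2) : cutchi s η hη x = 0 := by
  rw [cutchi_def]
  rw [show (0:ℝ) = ∫ (_ : R3), (0:ℝ) by simp]
  congr 1; funext t
  rcases eq_or_ne ((bumpη η hη).normed volume t) 0 with h | h
  · simp [h]
  · have ht : t ∈ Metric.ball (0:R3) (η/2) := by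
      have h2 : t ∈ Metric.ball (0:R3) ((bumpη η hη).rOut) := by
        rw [← (bumpη η hη).support_normed_eq (μ := volume)]; exact h
      simpa [bumpη] using h2
    have htn : ‖t‖ < η/2 := mem_ball_zero_iff.1 ht
    have hdist : dist (x - t) x = ‖t‖ := by
      rw [dist_eq_norm]; simp
    have htr := infDist_le_infDist_add_dist (x := x - t) (y := x) (s := s)
    rw [hdist] at htr
    have h3 : infDist (x - t) s ≤ η := by linarith
    rw [cutf_eq_zero hη h3, mul_zero]

lemma cutchi_eq_one (hη : 0 < η) {x : R3} (hx : 3*η ≤ infDist x s) : cutchi s η hη x = 1 := by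
  rw [cutchi_def]
  have h : ∀ t, (bumpη η hη).normed volume t * cutf s η (x - t)
      = (bumpη η hη).normed volume t := by
    intro t
    rcases eq_or_ne ((bumpη η hη).normed volume t) 0 with h | h
    · simp [h]
    · have ht : t ∈ Metric.ball (0:R3) (η/2) := by
        have h2 : t ∈ Metric.ball (0:R3) ((bumpη η hη).rOut) := by
          rw [← (bumpη η hη).support_normed_eq (μ := volume)]; exact h
        simpa [bumpη] using h2
      have htn : ‖t‖ < η/2 := mem_ball_zero_iff.1 ht
      have hdist : dist x (x - t) = ‖t‖ := by
        rw [dist_eq_norm]; simp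
      have h2 : 2*η ≤ infDist (x - t) s := by
        have h3 := infDist_le_infDist_add_dist (x := x) (y := x - t) (s := s)
        rw [hdist] at h3
        linarith
      rw [cutf_eq_one hη h2, mul_one]
  simp only [h]
  exact (bumpη η hη).integral_normed

lemma cutchi_nonneg (hη : 0 < η) (x : R3) : 0 ≤ cutchi s η hη x := by
  rw [cutchi_def]
  apply integral_nonneg
  intro t
  exact mul_nonneg ((bumpη η hη).nonneg_normed t) (cutf_nonneg _)

lemma cutchi_le_one (hη : 0 < η) (x : R3) : cutchi s η hη x ≤ 1 := by
  rw [cutchi_def]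
  calc ∫ t, (bumpη η hη).normed volume t * cutf s η (x - t)
      ≤ ∫ t, (bumpη η hη).normed volume t := by
        apply integral_mono (cutchi_integrand_integrable hη x) (bumpη η hη).integrable_normed
        intro t
        calc (bumpη η hη).normed volume t * cutf s η (x - t)
            ≤ (bumpη η hη).normed volume t * 1 :=
              mul_le_mul_of_nonneg_left (cutf_le_one _) ((bumpη η hη).nonneg_normed t)
          _ = _ := mul_one _
    _ = 1 := (bumpη η hη).integral_normed

lemma cutchi_lip (hη : 0 < η) : LipschitzWith (η⁻¹).toNNReal (cutchi s η hη) := by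
  apply LipschitzWith.of_dist_le_mul
  intro x x'
  rw [Real.dist_eq, cutchi_def, cutchi_def, ← integral_sub (cutchi_integrand_integrable hη x)
    (cutchi_integrand_integrable hη x')]
  calc |∫ t, ((bumpη η hη).normed volume t * cutf s η (x - t)
        - (bumpη η hη).normed volume t * cutf s η (x' - t))|
      ≤ ∫ t, |(bumpη η hη).normed volume t * cutf s η (x - t)
        - (bumpη η hη).normed volume t * cutf s η (x' - t)| := by
        simpa [Real.norm_eq_abs] using
          norm_integral_le_integral_norm (μ := volume) (f := fun t => (bumpη η hη).normed volume t * cutf s η (x - t)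
            - (bumpη η hη).normed volume t * cutf s η (x' - t))
    _ ≤ ∫ t, (bumpη η hη).normed volume t * (η⁻¹ * dist x x') := by
        apply integral_mono
        · exact ((cutchi_integrand_integrable hη x).sub (cutchi_integrand_integrable hη x')).abs
        · exact ((bumpη η hη).integrable_normed).mul_const _
        · intro t
          dsimp only
          rw [← mul_sub, abs_mul, abs_of_nonneg ((bumpη η hη).nonneg_normed t)]
          apply mul_le_mul_of_nonneg_left _ ((bumpη η hη).nonneg_normed t)
          have h := (cutf_lip (s := s) hη).dist_le_mul (x - t) (x' - t)
          rw [Real.dist_eq, Real.coe_toNNReal _ (by positivity)] at h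
          have hd : dist (x - t) (x' - t) = dist x x' := by
            simp [dist_eq_norm]
          rw [hd] at h
          exact h
    _ = η⁻¹ * dist x x' := by
        rw [integral_mul_const, (bumpη η hη).integral_normed, one_mul]
  · exact le_of_eq (by rw [Real.coe_toNNReal _ (by positivity)])

lemma cutchi_contDiff (hη : 0 < η) : ContDiff ℝ 1 (cutchi s η hη) := by
  apply HasCompactSupport.contDiff_convolution_left
  · exact (bumpη η hη).hasCompactSupport_normed
  · exact (bumpη η hη).contDiff_normed
  · exact (cutf_continuous hη).locallyIntegrable

lemma cutchi_norm_fderiv_le (hη : 0 < η) (x : R3) :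
    ‖fderiv ℝ (cutchi s η hη) x‖ ≤ η⁻¹ := by
  have h := norm_fderiv_le_of_lipschitz ℝ (cutchi_lip (s := s) hη) (x₀ := x)
  rwa [Real.coe_toNNReal _ (by positivity)] at h

lemma cutchi_fderiv_eq_zero (hη : 0 < η) {x : R3} (hx : 3*η < infDist x s) :
    fderiv ℝ (cutchi s η hη) x = 0 := by
  have hopen : IsOpen {y : R3 | 3*η < infDist y s} :=
    isOpen_lt continuous_const (continuous_infDist_pt s)
  have hev : cutchi s η hη =ᶠ[nhds x] fun _ => (1:ℝ) := by
    filter_upwards [hopen.mem_nhds hx] with y hy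
    exact cutchi_eq_one hη (le_of_lt hy)
  rw [hev.fderiv_eq, fderiv_fun_const]
  rfl

end Aux

set_option maxHeartbeats 2000000 in
/-- Energy formula (Theorem 1, double-integral form):
e_d = ∫_Ω ‖∇u₀‖² dx + (1/4π) ∫_Γ ∫_Γ ψ(x)ψ(y)/‖x−y‖ dσ(y) dσ(x)
with ψ = m·n − ∂ₙu₀. -/
theorem energy_formula_double_integral
    (Ω : Set R3) (hΩopen : IsOpen Ω) (hΩbd : Bornology.IsBounded Ω)
    (σ : Measure R3) (hσ : σ = (μH[2] : Measure R3).restrict (frontier Ω))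
    (hσfin : σ Set.univ < ⊤)
    (n : R3 → R3) (hn : ∀ y ∈ frontier Ω, ‖n y‖ = 1)
    (hGG : ∀ (F : R3 → R3) (U : Set R3), IsOpen U → closure Ω ⊆ U → ContDiffOn ℝ 1 F U →
      ∫ x in Ω, vdiv F x = ∫ y, (inner ℝ (F y) (n y) : ℝ) ∂σ)
    (m : R3 → R3) (Um : Set R3) (hUmopen : IsOpen Um) (hUm : closure Ω ⊆ Um)
    (hm : ContDiffOn ℝ 1 m Um)
    (u₀ : R3 → ℝ) (U₀ : Set R3) (hU₀open : IsOpen U₀) (hU₀ : closure Ω ⊆ U₀)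
    (hu₀ : ContDiffOn ℝ 2 u₀ U₀) (hu₀pde : ∀ x ∈ Ω, lap u₀ x = vdiv m x)
    (hu₀Γ : ∀ y ∈ frontier Ω, u₀ y = 0)
    (ψ : R3 → ℝ) (hψ : ∀ y, ψ y = (inner ℝ (m y - gradient u₀ y) (n y) : ℝ))
    (u₁ : R3 → ℝ) (hu₁def : ∀ x, u₁ x = (4 * π)⁻¹ * ∫ y, ψ y / ‖x - y‖ ∂σ)
    (U₁ : Set R3) (hU₁open : IsOpen U₁) (hU₁ : closure Ω ⊆ U₁)
    (hu₁C1 : ContDiffOn ℝ 1 u₁ U₁) (hu₁C2 : ContDiffOn ℝ 2 u₁ Ω)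
    (hu₁harm : ∀ x ∈ Ω, lap u₁ x = 0)
    (hint : Integrable (fun p : R3 × R3 => ψ p.1 * ψ p.2 / ‖p.1 - p.2‖) (σ.prod σ)) :
    ∫ x in Ω, (inner ℝ (m x) (gradient u₀ x + gradient u₁ x) : ℝ) =
      (∫ x in Ω, ‖gradient u₀ x‖ ^ 2) +
        (4 * π)⁻¹ * ∫ x, (∫ y, ψ x * ψ y / ‖x - y‖ ∂σ) ∂σ := by
  classical
  rcases Set.eq_empty_or_nonempty Ω with hΩe | hΩne
  · have hfr : frontier Ω = (∅ : Set R3) := by rw [hΩe]; simp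
    have hσ0 : σ = 0 := by rw [hσ, hfr, Measure.restrict_empty]
    simp [hΩe, hσ0]
  -- basic setup
  have hΩK : Ω ⊆ closure Ω := subset_closure
  have hKc : IsCompact (closure Ω) := hΩbd.isCompact_closure
  have hΩmeas : MeasurableSet Ω := hΩopen.measurableSet
  have hfrmeas : MeasurableSet (frontier Ω) := isClosed_frontier.measurableSet
  have hvolΩ : volume Ω < ⊤ := lt_of_le_of_lt (measure_mono hΩK) hKc.measure_lt_top
  have hIntOn : ∀ f : R3 → ℝ, ContinuousOn f (closure Ω) → IntegrableOn f Ω volume := by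
    intro f hf
    exact (hf.integrableOn_compact hKc).mono_set hΩK
  have hxU₀ : ∀ x ∈ Ω, x ∈ U₀ := fun x hx => hU₀ (hΩK hx)
  have hxU₁ : ∀ x ∈ Ω, x ∈ U₁ := fun x hx => hU₁ (hΩK hx)
  have hxUm : ∀ x ∈ Ω, x ∈ Um := fun x hx => hUm (hΩK hx)
  -- gradients
  have hg₀ : ContDiffOn ℝ 1 (fun y => gradient u₀ y) U₀ := by
    apply contDiffOn_gradient u₀ U₀ hU₀open 1
    exact_mod_cast hu₀
  have hg₀c : ContinuousOn (fun y => gradient u₀ y) U₀ := hg₀.continuousOn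
  have hg₁c : ContinuousOn (fun y => gradient u₁ y) U₁ := by
    have h := contDiffOn_gradient u₁ U₁ hU₁open 0 (by exact_mod_cast hu₁C1)
    exact h.continuousOn
  have hg₁ : ContDiffOn ℝ 1 (fun y => gradient u₁ y) Ω := by
    apply contDiffOn_gradient u₁ Ω hΩopen 1
    exact_mod_cast hu₁C2
  have hdu₀ : ∀ x ∈ U₀, DifferentiableAt ℝ u₀ x := fun x hx =>
    (hu₀.differentiableOn two_ne_zero).differentiableAt (hU₀open.mem_nhds hx)
  have hdu₁ : ∀ x ∈ U₁, DifferentiableAt ℝ u₁ x := fun x hx =>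
    (hu₁C1.differentiableOn one_ne_zero).differentiableAt (hU₁open.mem_nhds hx)
  -- bounds on closure Ω
  obtain ⟨M₀', hM₀'⟩ := hKc.exists_bound_of_continuousOn (hg₀c.mono hU₀)
  obtain ⟨M₁', hM₁'⟩ := hKc.exists_bound_of_continuousOn (hg₁c.mono hU₁)
  set M₀ : ℝ := max M₀' 0 with hM₀def
  set M₁ : ℝ := max M₁' 0 with hM₁def
  have hM₀ : ∀ x ∈ closure Ω, ‖gradient u₀ x‖ ≤ M₀ := fun x hx =>
    le_trans (hM₀' x hx) (le_max_left _ _)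
  have hM₁ : ∀ x ∈ closure Ω, ‖gradient u₁ x‖ ≤ M₁ := fun x hx =>
    le_trans (hM₁' x hx) (le_max_left _ _)
  have hM₀nn : 0 ≤ M₀ := le_max_right _ _
  have hM₁nn : 0 ≤ M₁ := le_max_right _ _
  -- Lipschitz-type bound for u₀
  have hfd₀c : ContinuousOn (fderiv ℝ u₀) U₀ :=
    hu₀.continuousOn_fderiv_of_isOpen hU₀open (by norm_num)
  obtain ⟨L', hL'⟩ := hKc.exists_bound_of_continuousOn (hfd₀c.mono hU₀)
  set L : ℝ := max L' 0 with hLdef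
  have hL : ∀ x ∈ closure Ω, ‖fderiv ℝ u₀ x‖ ≤ L := fun x hx =>
    le_trans (hL' x hx) (le_max_left _ _)
  have hLnn : 0 ≤ L := le_max_right _ _
  -- Ωᶜ is closed and nonempty
  have hΩcc : IsClosed (Ωᶜ : Set R3) := hΩopen.isClosed_compl
  obtain ⟨R, hR⟩ := hΩbd.subset_closedBall (0 : R3)
  have hΩcne : (Ωᶜ : Set R3).Nonempty := by
    refine ⟨EuclideanSpace.single 0 (|R|+1), fun hmem => ?_⟩
    have h1 := hR hmem
    rw [Metric.mem_closedBall, dist_zero_right, EuclideanSpace.norm_single,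
      Real.norm_eq_abs, abs_of_nonneg (by positivity)] at h1
    have h3 := le_abs_self R
    have h2 := abs_nonneg R
    linarith
  have hfr_sub : frontier Ω ⊆ (Ωᶜ : Set R3) := by
    rw [hΩopen.frontier_eq]
    intro y hy
    exact hy.2
  -- |u₀ x| ≤ L * infDist x Ωᶜ on Ω
  have hu₀bd : ∀ x ∈ Ω, |u₀ x| ≤ L * Metric.infDist x Ωᶜ := by
    intro x hx
    obtain ⟨z, hzc, hzd⟩ := hΩcc.exists_infDist_eq_dist hΩcne x
    have hdpos : 0 < dist x z := by
      rcases eq_or_lt_of_le (dist_nonneg (x := x) (y := z)) with h | h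
      · exact absurd ((dist_eq_zero.1 h.symm) ▸ hx) hzc
      · exact h
    have hzcl : z ∈ closure Ω := by
      rw [Metric.mem_closure_iff]
      intro ε hε
      by_cases hcase : 1 ≤ ε / (2 * dist x z)
      · refine ⟨x, hx, ?_⟩
        rw [dist_comm]
        rw [le_div_iff₀ (by positivity)] at hcase
        linarith
      · push_neg at hcase
        set c : ℝ := 1 - ε / (2 * dist x z) with hc
        have hc0 : 0 ≤ c := by rw [hc]; linarith
        have hc1 : c < 1 := by
          rw [hc]
          have h9 : 0 < ε / (2 * dist x z) := by positivity
          linarith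
        refine ⟨(1-c) • x + c • z, ?_, ?_⟩
        · by_contra hmem
          have h2 : Metric.infDist x Ωᶜ ≤ dist x ((1-c) • x + c • z) :=
            Metric.infDist_le_dist_of_mem hmem
          have hdy2 : dist x ((1-c) • x + c • z) = c * dist x z := by
            have h1 : x - ((1-c) • x + c • z) = c • (x - z) := by module
            rw [dist_eq_norm, h1, norm_smul, Real.norm_eq_abs, abs_of_nonneg hc0, ← dist_eq_norm]
          rw [hzd, hdy2] at h2
          nlinarith
        · have h1 : z - ((1-c) • x + c • z) = (1-c) • (z - x) := by module
          rw [dist_eq_norm, h1, norm_smul, Real.norm_eq_abs, abs_of_nonneg (by linarith),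
            ← dist_eq_norm, dist_comm z x]
          have h2 : 1 - c = ε / (2 * dist x z) := by rw [hc]; ring
          rw [h2]
          rw [div_mul_eq_mul_div, mul_comm]
          rw [div_lt_iff₀ (by positivity : (0:ℝ) < 2 * dist x z)]
          nlinarith
    have hseg : segment ℝ x z ⊆ closure Ω := by
      intro y hy
      rcases hy with ⟨a, b, ha, hb, hab, rfl⟩
      rcases lt_or_eq_of_le (show b ≤ 1 by linarith) with hb1 | hb1
      · apply hΩK
        by_contra hmem
        have h2 : Metric.infDist x Ωᶜ ≤ dist x (a • x + b • z) :=
          Metric.infDist_le_dist_of_mem hmem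
        have hdy : dist x (a • x + b • z) = b * dist x z := by
          have h1 : x - (a • x + b • z) = b • (x - z) := by
            have hA : a = 1 - b := by linarith
            rw [hA]; module
          rw [dist_eq_norm, h1, norm_smul, Real.norm_eq_abs, abs_of_nonneg hb, ← dist_eq_norm]
        rw [hzd, hdy] at h2
        nlinarith
      · have ha0 : a = 0 := by linarith
        have hyz : a • x + b • z = z := by
          rw [ha0, hb1]; simp
        rw [hyz]
        exact hzcl
    have hzfr : z ∈ frontier Ω := by
      rw [hΩopen.frontier_eq]
      exact ⟨hzcl, hzc⟩
    have hmvt := (convex_segment x z).norm_image_sub_le_of_norm_hasFDerivWithin_le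
      (f := u₀) (f' := fun y => fderiv ℝ u₀ y) (C := L)
      (fun y hy => ((hdu₀ y (hU₀ (hseg hy))).hasFDerivAt).hasFDerivWithinAt)
      (fun y hy => hL y (hseg hy)) (left_mem_segment ℝ x z) (right_mem_segment ℝ x z)
    rw [hu₀Γ z hzfr, zero_sub, norm_neg, Real.norm_eq_abs] at hmvt
    rw [hzd]
    calc |u₀ x| ≤ L * ‖z - x‖ := hmvt
      _ = L * dist x z := by rw [← dist_eq_norm, dist_comm]
  -- boundary integrals vanishing helper
  have hbdy0 : ∀ F : R3 → R3, (∀ y ∈ frontier Ω, F y = 0) →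
      ∫ y, (inner ℝ (F y) (n y) : ℝ) ∂σ = 0 := by
    intro F hF
    rw [hσ]
    calc ∫ y in frontier Ω, (inner ℝ (F y) (n y) : ℝ) ∂μH[2]
        = ∫ y in frontier Ω, (0:ℝ) ∂μH[2] := by
          apply setIntegral_congr_fun hfrmeas
          intro y hy
          simp [hF y hy]
      _ = 0 := by simp
  -- GG identity 1 : ∫ (⟪∇u₀, m⟫ + u₀ div m) = 0
  have hGG1 : ∫ x in Ω, ((inner ℝ (gradient u₀ x) (m x) : ℝ) + u₀ x * vdiv m x) = 0 := by
    have hsm : ContDiffOn ℝ 1 (fun y => u₀ y • m y) (U₀ ∩ Um) :=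
      ((hu₀.of_le one_le_two).mono Set.inter_subset_left).smul (hm.mono Set.inter_subset_right)
    have hgg := hGG (fun y => u₀ y • m y) (U₀ ∩ Um) (hU₀open.inter hUmopen)
      (Set.subset_inter hU₀ hUm) hsm
    have hintg : ∫ x in Ω, vdiv (fun y => u₀ y • m y) x
        = ∫ x in Ω, ((inner ℝ (gradient u₀ x) (m x) : ℝ) + u₀ x * vdiv m x) := by
      apply setIntegral_congr_fun hΩmeas
      intro x hx
      exact vdiv_smul u₀ m x (hdu₀ x (hxU₀ x hx))
        (fun i => diffAt_comp hUmopen hm (hxUm x hx) i)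
    rw [← hintg, hgg]
    apply hbdy0
    intro y hy
    rw [hu₀Γ y hy, zero_smul]
  -- GG identity 2 : ∫ (‖∇u₀‖² + u₀ div m) = 0
  have hGG2 : ∫ x in Ω, (‖gradient u₀ x‖^2 + u₀ x * vdiv m x) = 0 := by
    have hsm : ContDiffOn ℝ 1 (fun y => u₀ y • gradient u₀ y) U₀ :=
      (hu₀.of_le one_le_two).smul hg₀
    have hgg := hGG (fun y => u₀ y • gradient u₀ y) U₀ hU₀open hU₀ hsm
    have hintg : ∫ x in Ω, vdiv (fun y => u₀ y • gradient u₀ y) x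
        = ∫ x in Ω, (‖gradient u₀ x‖^2 + u₀ x * vdiv m x) := by
      apply setIntegral_congr_fun hΩmeas
      intro x hx
      have h1 := vdiv_smul u₀ (fun y => gradient u₀ y) x (hdu₀ x (hxU₀ x hx))
        (fun i => diffAt_comp hU₀open hg₀ (hxU₀ x hx) i)
      rw [h1, real_inner_self_eq_norm_sq]
      have h2 : vdiv (fun y => gradient u₀ y) x = vdiv m x := hu₀pde x hx
      rw [h2]
    rw [← hintg, hgg]
    apply hbdy0
    intro y hy
    rw [hu₀Γ y hy, zero_smul]
  -- GG identity 3 : ∫ ⟪∇u₁, m - ∇u₀⟫ = ∫ u₁ ψ dσ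
  have hGG3 : ∫ x in Ω, (inner ℝ (gradient u₁ x) (m x - gradient u₀ x) : ℝ)
      = ∫ y, u₁ y * ψ y ∂σ := by
    have hGsub : ContDiffOn ℝ 1 (fun y => m y - gradient u₀ y) (U₀ ∩ Um) :=
      (hm.mono Set.inter_subset_right).sub (hg₀.mono Set.inter_subset_left)
    have hsm : ContDiffOn ℝ 1 (fun y => u₁ y • (m y - gradient u₀ y)) ((U₀ ∩ Um) ∩ U₁) :=
      (hu₁C1.mono Set.inter_subset_right).smul (hGsub.mono Set.inter_subset_left)
    have hgg := hGG (fun y => u₁ y • (m y - gradient u₀ y)) ((U₀ ∩ Um) ∩ U₁)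
      ((hU₀open.inter hUmopen).inter hU₁open)
      (Set.subset_inter (Set.subset_inter hU₀ hUm) hU₁) hsm
    have hintg : ∫ x in Ω, vdiv (fun y => u₁ y • (m y - gradient u₀ y)) x
        = ∫ x in Ω, (inner ℝ (gradient u₁ x) (m x - gradient u₀ x) : ℝ) := by
      apply setIntegral_congr_fun hΩmeas
      intro x hx
      have hxI : x ∈ U₀ ∩ Um := ⟨hxU₀ x hx, hxUm x hx⟩
      have h1 := vdiv_smul u₁ (fun y => m y - gradient u₀ y) x (hdu₁ x (hxU₁ x hx))
        (fun i => diffAt_comp (hU₀open.inter hUmopen) hGsub hxI i)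
      rw [h1]
      have h2 := vdiv_sub m (fun y => gradient u₀ y) x
        (fun i => diffAt_comp hUmopen hm (hxUm x hx) i)
        (fun i => diffAt_comp hU₀open hg₀ (hxU₀ x hx) i)
      have h3 : vdiv (fun y => gradient u₀ y) x = vdiv m x := hu₀pde x hx
      rw [h2, h3, sub_self, mul_zero, add_zero]
    have hbdy : ∫ y, (inner ℝ (u₁ y • (m y - gradient u₀ y)) (n y) : ℝ) ∂σ
        = ∫ y, u₁ y * ψ y ∂σ := by
      congr 1
      funext y
      rw [real_inner_smul_left, ← hψ y]
    rw [← hintg, hgg]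
    exact hbdy
  -- GG identity 4 (the key step) : ∫ ⟪∇u₀, ∇u₁⟫ = 0, via smooth cutoffs
  have eq4 : ∫ x in Ω, (inner ℝ (gradient u₀ x) (gradient u₁ x) : ℝ) = 0 := by
    have hdpos : ∀ k : ℕ, (0:ℝ) < ((k:ℝ)+1)⁻¹ := fun k => by positivity
    set χ : ℕ → R3 → ℝ := fun k => cutchi Ωᶜ ((k:ℝ)+1)⁻¹ (hdpos k) with hχdef
    set Φ : ℕ → R3 → ℝ := fun k x =>
      χ k x * (inner ℝ (gradient u₀ x) (gradient u₁ x) : ℝ)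
        + u₀ x * (fderiv ℝ (χ k) x (gradient u₁ x)) with hΦdef
    have hχsm : ∀ k, ContDiff ℝ 1 (χ k) := fun k => cutchi_contDiff (hdpos k)
    -- each cutoff integral vanishes by Gauss-Green
    have hzero : ∀ k, ∫ x in Ω, Φ k x = 0 := by
      intro k
      have hFsm : ContDiffOn ℝ 1 (fun y => (u₀ y * χ k y) • gradient u₁ y) Set.univ := by
        rw [contDiffOn_univ, contDiff_iff_contDiffAt]
        intro x
        by_cases hx : x ∈ Ω
        · have h1 : ContDiffOn ℝ 1 (fun y => (u₀ y * χ k y) • gradient u₁ y) Ω :=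
            (((hu₀.of_le one_le_two).mono (fun y hy => hxU₀ y hy)).mul
              ((hχsm k).contDiffOn)).smul hg₁
          exact h1.contDiffAt (hΩopen.mem_nhds hx)
        · have hOopen : IsOpen {y : R3 | Metric.infDist y Ωᶜ < ((k:ℝ)+1)⁻¹ / 2} :=
            isOpen_lt (Metric.continuous_infDist_pt _) continuous_const
          have hxO : x ∈ {y : R3 | Metric.infDist y Ωᶜ < ((k:ℝ)+1)⁻¹ / 2} := by
            have h0 : Metric.infDist x Ωᶜ = 0 := Metric.infDist_zero_of_mem hx
            simp only [Set.mem_setOf_eq, h0]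
            positivity
          apply ContDiffAt.congr_of_eventuallyEq (contDiffAt_const (c := (0:R3)))
          filter_upwards [hOopen.mem_nhds hxO] with y hy
          have hz : χ k y = 0 := cutchi_eq_zero (hdpos k) (le_of_lt hy)
          simp [hz]
      have hgg := hGG (fun y => (u₀ y * χ k y) • gradient u₁ y) Set.univ isOpen_univ
        (Set.subset_univ _) hFsm
      have hintg : ∫ x in Ω, vdiv (fun y => (u₀ y * χ k y) • gradient u₁ y) x
          = ∫ x in Ω, Φ k x := by
        apply setIntegral_congr_fun hΩmeas
        intro x hx
        have hhd : DifferentiableAt ℝ (fun y => u₀ y * χ k y) x :=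
          (hdu₀ x (hxU₀ x hx)).mul (((hχsm k).differentiable one_ne_zero) x)
        have hGd : ∀ i, DifferentiableAt ℝ (fun y => gradient u₁ y i) x :=
          fun i => diffAt_comp hΩopen hg₁ hx i
        have h1 := vdiv_smul (fun y => u₀ y * χ k y) (fun y => gradient u₁ y) x hhd hGd
        have hlap : vdiv (fun y => gradient u₁ y) x = 0 := hu₁harm x hx
        rw [hlap, mul_zero, add_zero] at h1
        calc vdiv (fun y => (u₀ y * χ k y) • gradient u₁ y) x
            = (inner ℝ (gradient (fun y => u₀ y * χ k y) x) (gradient u₁ x) : ℝ) := h1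
          _ = fderiv ℝ (fun y => u₀ y * χ k y) x (gradient u₁ x) := inner_gradient_eq _ _ _
          _ = u₀ x * (fderiv ℝ (χ k) x (gradient u₁ x))
              + χ k x * (fderiv ℝ u₀ x (gradient u₁ x)) := by
              rw [fderiv_fun_mul (hdu₀ x (hxU₀ x hx)) (((hχsm k).differentiable one_ne_zero) x)]
              simp
          _ = Φ k x := by
              rw [hΦdef]
              dsimp only
              rw [← inner_gradient_eq u₀ x (gradient u₁ x)]
              ring
      have hbdy : ∫ y, (inner ℝ ((u₀ y * χ k y) • gradient u₁ y) (n y) : ℝ) ∂σ = 0 := by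
        apply hbdy0
        intro y hy
        rw [hu₀Γ y hy, zero_mul, zero_smul]
      rw [← hintg, hgg]
      exact hbdy
    -- uniform bound
    have hbound : ∀ k, ∀ x ∈ Ω, |Φ k x| ≤ M₀ * M₁ + 3 * L * M₁ := by
      intro k x hx
      have hxK := hΩK hx
      have hip : |(inner ℝ (gradient u₀ x) (gradient u₁ x) : ℝ)| ≤ M₀ * M₁ := by
        refine le_trans (abs_real_inner_le_norm _ _) ?_
        exact mul_le_mul (hM₀ x hxK) (hM₁ x hxK) (norm_nonneg _) hM₀nn
      have h1 : |χ k x * (inner ℝ (gradient u₀ x) (gradient u₁ x) : ℝ)| ≤ M₀ * M₁ := by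
        rw [abs_mul]
        calc |χ k x| * |(inner ℝ (gradient u₀ x) (gradient u₁ x) : ℝ)|
            ≤ 1 * (M₀ * M₁) := by
              apply mul_le_mul _ hip (abs_nonneg _) (by norm_num)
              rw [abs_le]
              exact ⟨le_trans (by norm_num) (cutchi_nonneg (hdpos k) x),
                cutchi_le_one (hdpos k) x⟩
          _ = M₀ * M₁ := one_mul _
      have h2 : |u₀ x * (fderiv ℝ (χ k) x (gradient u₁ x))| ≤ 3 * L * M₁ := by
        by_cases hcase : 3 * ((k:ℝ)+1)⁻¹ < Metric.infDist x Ωᶜ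
        · rw [hχdef]
          dsimp only
          rw [cutchi_fderiv_eq_zero (hdpos k) hcase]
          simp only [ContinuousLinearMap.zero_apply, mul_zero, abs_zero]
          positivity
        · push_neg at hcase
          have hb1 : |u₀ x| ≤ L * (3 * ((k:ℝ)+1)⁻¹) :=
            le_trans (hu₀bd x hx) (mul_le_mul_of_nonneg_left hcase hLnn)
          have hb2 : |fderiv ℝ (χ k) x (gradient u₁ x)| ≤ (((k:ℝ)+1)⁻¹)⁻¹ * M₁ := by
            rw [← Real.norm_eq_abs]
            calc ‖fderiv ℝ (χ k) x (gradient u₁ x)‖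
                ≤ ‖fderiv ℝ (χ k) x‖ * ‖gradient u₁ x‖ :=
                  ContinuousLinearMap.le_opNorm _ _
              _ ≤ (((k:ℝ)+1)⁻¹)⁻¹ * M₁ := by
                  apply mul_le_mul (cutchi_norm_fderiv_le (hdpos k) x) (hM₁ x hxK)
                    (norm_nonneg _)
                  positivity
          rw [abs_mul]
          calc |u₀ x| * |fderiv ℝ (χ k) x (gradient u₁ x)|
              ≤ (L * (3 * ((k:ℝ)+1)⁻¹)) * ((((k:ℝ)+1)⁻¹)⁻¹ * M₁) := by
                apply mul_le_mul hb1 hb2 (abs_nonneg _)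
                positivity
            _ = 3 * L * M₁ * (((k:ℝ)+1)⁻¹ * (((k:ℝ)+1)⁻¹)⁻¹) := by ring
            _ = 3 * L * M₁ := by
                rw [mul_inv_cancel₀ (ne_of_gt (hdpos k)), mul_one]
      rw [hΦdef]
      dsimp only
      exact le_trans (abs_add_le _ _) (add_le_add h1 h2)
    -- pointwise convergence
    have htends : ∀ x ∈ Ω, Filter.Tendsto (fun k => Φ k x) Filter.atTop
        (nhds ((inner ℝ (gradient u₀ x) (gradient u₁ x) : ℝ))) := by
      intro x hx
      have hxpos : 0 < Metric.infDist x Ωᶜ :=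
        (hΩcc.notMem_iff_infDist_pos hΩcne).1 (Set.notMem_compl_iff.2 hx)
      have ht0 : Filter.Tendsto (fun k : ℕ => 3 * ((k:ℝ)+1)⁻¹) Filter.atTop (nhds 0) := by
        have h1 := tendsto_one_div_add_atTop_nhds_zero_nat (𝕜 := ℝ)
        have h2 := h1.const_mul (3:ℝ)
        simpa [one_div] using h2
      have hev : ∀ᶠ k in Filter.atTop, Φ k x
          = (inner ℝ (gradient u₀ x) (gradient u₁ x) : ℝ) := by
        filter_upwards [ht0.eventually_lt_const hxpos] with k hk
        have hone : χ k x = 1 := cutchi_eq_one (hdpos k) (le_of_lt hk)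
        have hder0 : fderiv ℝ (χ k) x = 0 := cutchi_fderiv_eq_zero (hdpos k) hk
        rw [hΦdef]
        dsimp only
        rw [hone, hder0]
        simp
      exact Filter.Tendsto.congr' (hev.mono fun k h => h.symm) tendsto_const_nhds
    -- integrability of each term
    have hΦint : ∀ k, IntegrableOn (Φ k) Ω volume := by
      intro k
      apply hIntOn
      apply ContinuousOn.add
      · exact (((hχsm k).continuous.continuousOn).mul
          ((hg₀c.mono hU₀).inner (hg₁c.mono hU₁)))
      · apply ((hu₀.continuousOn).mono hU₀).mul
        exact (((hχsm k).continuous_fderiv one_ne_zero).continuousOn).clm_apply (hg₁c.mono hU₁)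
    have hconst : IntegrableOn (fun _ : R3 => M₀ * M₁ + 3 * L * M₁) Ω volume :=
      integrableOn_const hvolΩ.ne
    have hDCT := MeasureTheory.tendsto_integral_of_dominated_convergence
      (F := fun k x => Φ k x) (f := fun x => (inner ℝ (gradient u₀ x) (gradient u₁ x) : ℝ))
      (bound := fun _ => M₀ * M₁ + 3 * L * M₁)
      (fun k => (hΦint k).aestronglyMeasurable)
      hconst
      (fun k => (ae_restrict_iff' hΩmeas).2 (Filter.Eventually.of_forall
        (fun x hx => by rw [Real.norm_eq_abs]; exact hbound k x hx)))
      ((ae_restrict_iff' hΩmeas).2 (Filter.Eventually.of_forall htends))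
    have hconstt : Filter.Tendsto (fun k : ℕ => (0:ℝ)) Filter.atTop
        (nhds (∫ x in Ω, (inner ℝ (gradient u₀ x) (gradient u₁ x) : ℝ))) := by
      exact Filter.Tendsto.congr (fun k => hzero k) hDCT
    exact tendsto_nhds_unique hconstt tendsto_const_nhds
  -- integrability of the various integrands
  have hf1 : IntegrableOn (fun x => (inner ℝ (gradient u₀ x) (m x) : ℝ)) Ω volume :=
    hIntOn _ ((hg₀c.mono hU₀).inner ((hm.continuousOn).mono hUm))
  have hf2 : IntegrableOn (fun x => u₀ x * vdiv m x) Ω volume :=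
    hIntOn _ (((hu₀.continuousOn).mono hU₀).mul ((continuousOn_vdiv hUmopen hm).mono hUm))
  have hf3 : IntegrableOn (fun x => ‖gradient u₀ x‖^2) Ω volume :=
    hIntOn _ (((hg₀c.mono hU₀).norm).pow 2)
  have hf4 : IntegrableOn (fun x => (inner ℝ (gradient u₁ x) (m x) : ℝ)) Ω volume :=
    hIntOn _ ((hg₁c.mono hU₁).inner ((hm.continuousOn).mono hUm))
  have hf5 : IntegrableOn (fun x => (inner ℝ (gradient u₁ x) (gradient u₀ x) : ℝ)) Ω volume :=
    hIntOn _ ((hg₁c.mono hU₁).inner (hg₀c.mono hU₀))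
  -- split the Gauss-Green identities
  have e1 : (∫ x in Ω, (inner ℝ (gradient u₀ x) (m x) : ℝ))
      + (∫ x in Ω, u₀ x * vdiv m x) = 0 := by
    rw [← integral_add hf1 hf2]
    exact hGG1
  have e2 : (∫ x in Ω, ‖gradient u₀ x‖^2) + (∫ x in Ω, u₀ x * vdiv m x) = 0 := by
    rw [← integral_add hf3 hf2]
    exact hGG2
  have e3 : (∫ x in Ω, (inner ℝ (gradient u₁ x) (m x) : ℝ))
      - (∫ x in Ω, (inner ℝ (gradient u₁ x) (gradient u₀ x) : ℝ)) = ∫ y, u₁ y * ψ y ∂σ := by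
    rw [← integral_sub hf4 hf5, ← hGG3]
    apply setIntegral_congr_fun hΩmeas
    intro x hx
    exact (inner_sub_right _ _ _).symm
  have e5 : (∫ x in Ω, (inner ℝ (gradient u₁ x) (gradient u₀ x) : ℝ)) = 0 := by
    rw [← eq4]
    apply setIntegral_congr_fun hΩmeas
    intro x hx
    exact real_inner_comm _ _
  have hLHS : ∫ x in Ω, (inner ℝ (m x) (gradient u₀ x + gradient u₁ x) : ℝ)
      = (∫ x in Ω, (inner ℝ (gradient u₀ x) (m x) : ℝ))
        + (∫ x in Ω, (inner ℝ (gradient u₁ x) (m x) : ℝ)) := by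
    rw [← integral_add hf1 hf4]
    apply setIntegral_congr_fun hΩmeas
    intro x hx
    dsimp only
    rw [inner_add_right, real_inner_comm (m x) (gradient u₀ x),
      real_inner_comm (m x) (gradient u₁ x)]
  have h4pi : (4 * π) ≠ 0 := by positivity
  have hRHS : (4 * π)⁻¹ * ∫ x, (∫ y, ψ x * ψ y / ‖x - y‖ ∂σ) ∂σ = ∫ y, u₁ y * ψ y ∂σ := by
    have h1 : (fun x => ∫ y, ψ x * ψ y / ‖x - y‖ ∂σ) = fun x => (4*π) * (u₁ x * ψ x) := by
      funext x
      have h2 : (fun y => ψ x * ψ y / ‖x - y‖) = fun y => ψ x * (ψ y / ‖x - y‖) := by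
        funext y; ring
      rw [h2, integral_const_mul, hu₁def x]
      field_simp
    rw [h1, integral_const_mul, ← mul_assoc, inv_mul_cancel₀ h4pi, one_mul]
  rw [hLHS, hRHS]
  linarith [e1, e2, e3, e5]
end
end

section
/- Assume the frontier Γ of Ω has Lebesgue measure zero. Let u₀ : ℝ³ → ℝ be C¹ on ℝ³ with u₀ = 0 on Γ and u₀ = 0 on ℝ³ \ Ω, and let u₁ : ℝ³ → ℝ be C² on an open neighborhood of the closure of Ω with Δu₁ = 0 on Ω, such that ∇u₀ and ∇u₁ are square-integrable on ℝ³. Then the whole-space energy splits: ∫_{ℝ³} ‖∇u₀(x) + ∇u₁(x)‖² dx = ∫_Ω ‖∇u₀(x)‖² dx + ∫_{ℝ³} ‖∇u₁(x)‖² dx. -/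
open MeasureTheory Real
noncomputable section

lemma pd_eq_gradient_apply (f : R3 → ℝ) (i : Fin 3) (x : R3) :
    pd i f x = gradient f x i := by
  have h : (inner ℝ (gradient f x) (EuclideanSpace.single i (1:ℝ)) : ℝ)
      = fderiv ℝ f x (EuclideanSpace.single i 1) := by
    simp [gradient, InnerProductSpace.toDual_symm_apply]
  rw [pd, ← h, EuclideanSpace.inner_single_right]
  simp

lemma euclid_eq_sum_single (x : R3) : x = ∑ i, x i • (EuclideanSpace.single i (1:ℝ) : R3) := by
  ext j
  rw [WithLp.ofLp_sum, Finset.sum_apply]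
  simp [EuclideanSpace.single_apply]

lemma contDiffOn_pd {u : R3 → ℝ} {U : Set R3} (hU : IsOpen U) (hu : ContDiffOn ℝ 2 u U)
    (i : Fin 3) : ContDiffOn ℝ 1 (fun y => pd i u y) U := by
  have hfd : ContDiffOn ℝ 1 (fderiv ℝ u) U := hu.fderiv_of_isOpen hU (by norm_num)
  exact hfd.continuousLinearMap_comp
    (ContinuousLinearMap.apply ℝ ℝ (EuclideanSpace.single i (1:ℝ) : R3))

lemma contDiffOn_grad {u : R3 → ℝ} {U : Set R3} (hU : IsOpen U) (hu : ContDiffOn ℝ 2 u U) :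
    ContDiffOn ℝ 1 (fun y => gradient u y) U := by
  have h : (fun y => gradient u y)
      = fun y => ∑ i, pd i u y • (EuclideanSpace.single i (1:ℝ) : R3) := by
    funext y
    simp_rw [pd_eq_gradient_apply]
    exact euclid_eq_sum_single _
  rw [h]
  exact ContDiffOn.sum fun i _ => (contDiffOn_pd hU hu i).smul contDiffOn_const

lemma gradient_eq_zero_of_nhds_zero {u : R3 → ℝ} {x : R3} (h : ∀ᶠ y in nhds x, u y = 0) :
    gradient u x = 0 := by
  have : fderiv ℝ u x = fderiv ℝ (fun _ : R3 => (0:ℝ)) x :=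
    Filter.EventuallyEq.fderiv_eq h
  simp only [gradient, this, fderiv_const_apply, map_zero]

/-- Whole-space energy splitting: with u₀ vanishing outside Ω and u₁ harmonic
on Ω, ∫_{ℝ³} ‖∇u₀ + ∇u₁‖² dx = ∫_Ω ‖∇u₀‖² dx + ∫_{ℝ³} ‖∇u₁‖² dx. -/
theorem whole_space_energy_split
    (Ω : Set R3) (hΩopen : IsOpen Ω) (hΩbd : Bornology.IsBounded Ω)
    (σ : Measure R3) (hσ : σ = (μH[2] : Measure R3).restrict (frontier Ω))
    (hσfin : σ Set.univ < ⊤)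
    (n : R3 → R3) (hn : ∀ y ∈ frontier Ω, ‖n y‖ = 1)
    (hGG : ∀ (F : R3 → R3) (U : Set R3), IsOpen U → closure Ω ⊆ U → ContDiffOn ℝ 1 F U →
      ∫ x in Ω, vdiv F x = ∫ y, (inner ℝ (F y) (n y) : ℝ) ∂σ)
    (hΓnull : volume (frontier Ω) = 0)
    (u₀ : R3 → ℝ) (hu₀ : ContDiff ℝ 1 u₀)
    (hu₀Γ : ∀ y ∈ frontier Ω, u₀ y = 0) (hu₀ext : ∀ x ∉ Ω, u₀ x = 0)
    (u₁ : R3 → ℝ) (U₁ : Set R3) (hU₁open : IsOpen U₁) (hU₁ : closure Ω ⊆ U₁)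
    (hu₁ : ContDiffOn ℝ 2 u₁ U₁) (hu₁harm : ∀ x ∈ Ω, lap u₁ x = 0)
    (hgu₀L2 : MemLp (fun x => gradient u₀ x) 2 (volume : Measure R3))
    (hgu₁L2 : MemLp (fun x => gradient u₁ x) 2 (volume : Measure R3)) :
    ∫ x, ‖gradient u₀ x + gradient u₁ x‖ ^ 2 =
      (∫ x in Ω, ‖gradient u₀ x‖ ^ 2) + ∫ x, ‖gradient u₁ x‖ ^ 2 := by
  have hΩU₁ : Ω ⊆ U₁ := subset_closure.trans hU₁
  set F : R3 → R3 := fun y => u₀ y • gradient u₁ y with hF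
  -- regularity of F
  have hgradC : ContDiffOn ℝ 1 (fun y => gradient u₁ y) U₁ := contDiffOn_grad hU₁open hu₁
  have hFC : ContDiffOn ℝ 1 F U₁ := (hu₀.contDiffOn).smul hgradC
  -- gradient of u₀ vanishes outside closure Ω
  have hgrad0 : ∀ x ∉ closure Ω, gradient u₀ x = 0 := by
    intro x hx
    apply gradient_eq_zero_of_nhds_zero
    have hopen : IsOpen (closure Ω)ᶜ := isClosed_closure.isOpen_compl
    filter_upwards [hopen.mem_nhds hx] with y hy
    exact hu₀ext y (fun h => hy (subset_closure h))
  -- a.e. vanishing outside Ω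
  have hae : ∀ᵐ x ∂(volume : Measure R3), x ∉ frontier Ω := by
    rw [MeasureTheory.ae_iff]
    simpa using hΓnull
  -- divergence identity on Ω
  have hdiv : ∀ x ∈ Ω, vdiv F x
      = u₀ x * lap u₁ x + (inner ℝ (gradient u₀ x) (gradient u₁ x) : ℝ) := by
    intro x hx
    have hxU : x ∈ U₁ := hΩU₁ hx
    have hd₀ : DifferentiableAt ℝ u₀ x := (hu₀.differentiable one_ne_zero) x
    have hdg : ∀ i : Fin 3, DifferentiableAt ℝ (fun y => gradient u₁ y i) x := by
      intro i
      have : (fun y => gradient u₁ y i) = fun y => pd i u₁ y := by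
        funext y; rw [pd_eq_gradient_apply]
      rw [this]
      exact ((contDiffOn_pd hU₁open hu₁ i).differentiableOn one_ne_zero).differentiableAt
        (hU₁open.mem_nhds hxU)
    have hterm : ∀ i : Fin 3, pd i (fun y => F y i) x
        = u₀ x * pd i (fun y => gradient u₁ y i) x + gradient u₁ x i * pd i u₀ x := by
      intro i
      have hFi : (fun y => F y i) = fun y => u₀ y * gradient u₁ y i := by
        funext y; simp [hF]
      rw [pd, hFi, fderiv_fun_mul hd₀ (hdg i)]
      simp [pd]
    rw [vdiv]
    simp_rw [hterm]
    rw [Finset.sum_add_distrib, ← Finset.mul_sum]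
    congr 1
    · simp_rw [pd_eq_gradient_apply]
      rw [PiLp.inner_apply]
      simp only [RCLike.inner_apply, conj_trivial]
  -- boundary integral vanishes
  have hbd : ∫ y, (inner ℝ (F y) (n y) : ℝ) ∂σ = 0 := by
    rw [hσ]
    apply setIntegral_eq_zero_of_forall_eq_zero
    intro y hy
    simp [hF, hu₀Γ y hy]
  -- Gauss–Green gives ∫_Ω ⟪∇u₀, ∇u₁⟫ = 0
  have hinnΩ : ∫ x in Ω, (inner ℝ (gradient u₀ x) (gradient u₁ x) : ℝ) = 0 := by
    have h1 : ∫ x in Ω, vdiv F x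
        = ∫ x in Ω, (inner ℝ (gradient u₀ x) (gradient u₁ x) : ℝ) :=
      setIntegral_congr_fun hΩopen.measurableSet fun x hx => by
        rw [hdiv x hx, hu₁harm x hx]; ring
    rw [← h1, hGG F U₁ hU₁open hU₁ hFC, hbd]
  -- reduce whole-space integrals to Ω for anything vanishing with ∇u₀
  have hout : ∀ᵐ x ∂(volume : Measure R3), x ∉ Ω → gradient u₀ x = 0 := by
    filter_upwards [hae] with x hxΓ hxΩ
    refine hgrad0 x fun hc => ?_
    rw [closure_eq_self_union_frontier] at hc
    rcases hc with h | h
    · exact hxΩ h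
    · exact hxΓ h
  have hinnR : ∫ x, (inner ℝ (gradient u₀ x) (gradient u₁ x) : ℝ) = 0 := by
    rw [← hinnΩ]
    symm
    apply setIntegral_eq_integral_of_ae_compl_eq_zero
    filter_upwards [hout] with x hx hxΩ
    rw [hx hxΩ, inner_zero_left]
  have hnormR : ∫ x in Ω, ‖gradient u₀ x‖ ^ 2 = ∫ x, ‖gradient u₀ x‖ ^ 2 := by
    apply setIntegral_eq_integral_of_ae_compl_eq_zero
    filter_upwards [hout] with x hx hxΩ
    rw [hx hxΩ]; simp
  -- integrability
  have int0 : Integrable (fun x => ‖gradient u₀ x‖ ^ 2) (volume : Measure R3) :=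
    (memLp_two_iff_integrable_sq_norm hgu₀L2.1).mp hgu₀L2
  have int1 : Integrable (fun x => ‖gradient u₁ x‖ ^ 2) (volume : Measure R3) :=
    (memLp_two_iff_integrable_sq_norm hgu₁L2.1).mp hgu₁L2
  have intI : Integrable (fun x => (inner ℝ (gradient u₀ x) (gradient u₁ x) : ℝ))
      (volume : Measure R3) := by
    have h := L2.integrable_inner (𝕜 := ℝ) (hgu₀L2.toLp _) (hgu₁L2.toLp _)
    refine h.congr ?_
    filter_upwards [hgu₀L2.coeFn_toLp, hgu₁L2.coeFn_toLp] with x h₀ h₁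
    rw [h₀, h₁]
  -- expand and conclude
  have hexp : (fun x => ‖gradient u₀ x + gradient u₁ x‖ ^ 2)
      = fun x => ‖gradient u₀ x‖ ^ 2
        + (2 * (inner ℝ (gradient u₀ x) (gradient u₁ x) : ℝ) + ‖gradient u₁ x‖ ^ 2) := by
    funext x
    rw [norm_add_sq_real]; ring
  have intc : Integrable (fun x => 2 * (inner ℝ (gradient u₀ x) (gradient u₁ x) : ℝ))
      (volume : Measure R3) := intI.const_mul 2
  have intmid : Integrable (fun x => 2 * (inner ℝ (gradient u₀ x) (gradient u₁ x) : ℝ)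
      + ‖gradient u₁ x‖ ^ 2) (volume : Measure R3) := intc.add int1
  rw [hexp, integral_add int0 intmid, integral_add intc int1, integral_const_mul, hinnR, hnormR]
  ring
end
end
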